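/- arXiv:1807.02688 — 2 statements merged into one kernel-verified Lean document; each statement's English description precedes it below -/
import Mathlib

section
/- Let v_1, …, v_n be users with nonnegative values I_1 ≥ I_2 ≥ … ≥ I_n and acceptance probabilities p_1, …, p_n ∈ [0,1]. Consider probing the users one by one in a given order, stopping at the first user who accepts (user v_i accepts independently with probability p_i), and receiving value I_i of the accepting user (0 if all reject). Then the expected value of the ordering that probes users in non-increasing order of I_i is at least the expected value of any other ordering. -/
/-- Telescoping identity: probability that someone in `T` accepts. -/
lemma telescope_aux {n : ℕ} (q : Fin n → ℝ) (T : Finset (Fin n)) :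
    ∑ k ∈ T, (∏ j ∈ T.filter (· < k), (1 - q j)) * q k = 1 - ∏ j ∈ T, (1 - q j) := by
  induction T using Finset.induction_on_max with
  | empty => simp
  | insert a s hmax ih =>
    have ha : a ∉ s := fun h => lt_irrefl a (hmax a h)
    rw [Finset.sum_insert ha, Finset.prod_insert ha]
    have h1 : (insert a s).filter (· < a) = s := by
      ext x
      simp only [Finset.mem_filter, Finset.mem_insert]
      constructor
      · rintro ⟨h | h, hlt⟩
        · exact absurd hlt (by simp [h])
        · exact h
      · intro hx; exact ⟨Or.inr hx, hmax x hx⟩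
    have h2 : ∀ k ∈ s, (insert a s).filter (· < k) = s.filter (· < k) := by
      intro k hk
      ext x
      simp only [Finset.mem_filter, Finset.mem_insert]
      constructor
      · rintro ⟨h | h, hlt⟩
        · subst h; exact absurd hlt (not_lt.mpr (le_of_lt (hmax k hk)))
        · exact ⟨h, hlt⟩
      · rintro ⟨hx, hlt⟩; exact ⟨Or.inr hx, hlt⟩
    rw [h1, Finset.sum_congr rfl (fun k hk => by rw [h2 k hk]), ih]
    ring

/-- Dropping factors from a product of numbers in `[0,1]` can only increase it. -/
lemma prod_subset_le {n : ℕ} (q : Fin n → ℝ) (hq0 : ∀ i, 0 ≤ q i) (hq1 : ∀ i, q i ≤ 1)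
    {s t : Finset (Fin n)} (hst : s ⊆ t) :
    ∏ j ∈ t, q j ≤ ∏ j ∈ s, q j := by
  rw [← Finset.prod_sdiff hst]
  have h1 : ∏ j ∈ t \ s, q j ≤ 1 :=
    Finset.prod_le_one (fun i _ => hq0 i) (fun i _ => hq1 i)
  have h2 : 0 ≤ ∏ j ∈ s, q j := Finset.prod_nonneg fun i _ => hq0 i
  nlinarith [Finset.prod_nonneg (fun i (_ : i ∈ t \ s) => hq0 i)]

/-- Key lemma: probability that the first acceptor lies in `S` is at most the
probability that someone in `S` accepts. -/
lemma key_aux {n : ℕ} (p : Fin n → ℝ) (hp0 : ∀ i, 0 ≤ p i) (hp1 : ∀ i, p i ≤ 1)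
    (σ : Equiv.Perm (Fin n)) (S : Finset (Fin n)) :
    ∑ k ∈ Finset.univ.filter (fun k => σ k ∈ S),
      (∏ j ∈ Finset.Iio k, (1 - p (σ j))) * p (σ k) ≤ 1 - ∏ i ∈ S, (1 - p i) := by
  set K := Finset.univ.filter (fun k => σ k ∈ S) with hK
  have hstep : ∀ k ∈ K,
      (∏ j ∈ Finset.Iio k, (1 - p (σ j))) * p (σ k) ≤
      (∏ j ∈ K.filter (· < k), (1 - p (σ j))) * p (σ k) := by
    intro k _
    have hsub : K.filter (· < k) ⊆ Finset.Iio k := by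
      intro x hx
      simp only [Finset.mem_filter, Finset.mem_Iio] at hx ⊢
      exact hx.2
    have := prod_subset_le (fun j => 1 - p (σ j))
      (fun i => by show (0:ℝ) ≤ 1 - p (σ i); linarith [hp1 (σ i)])
      (fun i => by show (1:ℝ) - p (σ i) ≤ 1; linarith [hp0 (σ i)]) hsub
    exact mul_le_mul_of_nonneg_right this (hp0 (σ k))
  calc ∑ k ∈ K, (∏ j ∈ Finset.Iio k, (1 - p (σ j))) * p (σ k)
      ≤ ∑ k ∈ K, (∏ j ∈ K.filter (· < k), (1 - p (σ j))) * p (σ k) :=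
        Finset.sum_le_sum hstep
    _ = 1 - ∏ k ∈ K, (1 - p (σ k)) := telescope_aux (fun j => p (σ j)) K
    _ = 1 - ∏ i ∈ S, (1 - p i) := by
        congr 1
        apply Finset.prod_nbij (fun k => σ k)
        · intro k hk; simp only [hK, Finset.mem_filter] at hk; exact hk.2
        · intro a _ b _ h; exact σ.injective h
        · intro i hi
          refine ⟨σ.symm i, ?_, by simp⟩
          simp only [hK, Finset.coe_filter, Set.mem_setOf_eq, Finset.mem_univ, true_and,
            Equiv.apply_symm_apply]
          exact hi
        · intro k _; rfl

theorem stmt_4 (n : ℕ) (I p : Fin n → ℝ)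
    (hIanti : ∀ i j : Fin n, i ≤ j → I j ≤ I i)
    (hInn : ∀ i, 0 ≤ I i)
    (hp0 : ∀ i, 0 ≤ p i) (hp1 : ∀ i, p i ≤ 1)
    (σ : Equiv.Perm (Fin n)) :
    ∑ k : Fin n, (∏ j ∈ Finset.Iio k, (1 - p (σ j))) * p (σ k) * I (σ k) ≤
      ∑ k : Fin n, (∏ j ∈ Finset.Iio k, (1 - p j)) * p k * I k := by
  classical
  -- g extends I by zero on ℕ
  set g : ℕ → ℝ := fun k => if h : k < n then I ⟨k, h⟩ else 0 with hg
  -- layer differences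
  set d : Fin n → ℝ := fun m => g m - g ((m : ℕ) + 1) with hdg
  have hgm : ∀ m : Fin n, g (m : ℕ) = I m := by
    intro m; simp [hg, m.isLt]
  have hd0 : ∀ m : Fin n, 0 ≤ d m := by
    intro m
    show (0:ℝ) ≤ g (m : ℕ) - g ((m : ℕ) + 1)
    by_cases h : (m : ℕ) + 1 < n
    · have h1 : g ((m : ℕ) + 1) = I ⟨(m : ℕ) + 1, h⟩ := by simp [hg, h]
      have h2 : I ⟨(m : ℕ) + 1, h⟩ ≤ I m := hIanti m ⟨(m : ℕ) + 1, h⟩ (by simp [Fin.le_def])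
      rw [hgm m, h1]; linarith
    · have h1 : g ((m : ℕ) + 1) = 0 := by simp [hg, h]
      rw [hgm m, h1]; simpa using hInn m
  -- layered decomposition of I
  have hd : ∀ i : Fin n, I i = ∑ m : Fin n, if i ≤ m then d m else 0 := by
    intro i
    have step1 : ∑ m : Fin n, (if i ≤ m then d m else 0) =
        ∑ k ∈ Finset.range n, (if (i : ℕ) ≤ k then g k - g (k + 1) else 0) := by
      rw [← Fin.sum_univ_eq_sum_range (fun k => if (i : ℕ) ≤ k then g k - g (k + 1) else 0) n]
      refine Finset.sum_congr rfl fun m _ => ?_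
      by_cases h : i ≤ m
      · rw [if_pos h, if_pos (Fin.le_def.mp h)]
      · rw [if_neg h, if_neg (fun hc => h (Fin.le_def.mpr hc))]
    have step2 : (Finset.range n).filter (fun k => (i : ℕ) ≤ k) = Finset.Ico (i : ℕ) n := by
      ext x
      simp only [Finset.mem_filter, Finset.mem_range, Finset.mem_Ico]
      omega
    have step3 : ∑ k ∈ Finset.Ico (i : ℕ) n, (g k - g (k + 1)) = g i - g n := by
      rw [Finset.sum_Ico_eq_sum_range]
      have h := Finset.sum_range_sub' (fun j => g ((i : ℕ) + j)) (n - (i : ℕ))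
      simp only [add_zero] at h
      calc ∑ j ∈ Finset.range (n - (i : ℕ)), (g ((i : ℕ) + j) - g ((i : ℕ) + j + 1))
          = ∑ j ∈ Finset.range (n - (i : ℕ)), (g ((i : ℕ) + j) - g ((i : ℕ) + (j + 1))) :=
            Finset.sum_congr rfl fun j _ => by rw [add_assoc]
        _ = g (i : ℕ) - g ((i : ℕ) + (n - (i : ℕ))) := h
        _ = g (i : ℕ) - g n := by rw [Nat.add_sub_cancel' (le_of_lt i.isLt)]
    have hgn : g n = 0 := by simp [hg]
    rw [step1, ← Finset.sum_filter, step2, step3, hgn, hgm i, sub_zero]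
  -- expansion into layers
  have expand : ∀ τ : Equiv.Perm (Fin n),
      ∑ k : Fin n, (∏ j ∈ Finset.Iio k, (1 - p (τ j))) * p (τ k) * I (τ k) =
      ∑ m : Fin n, d m * ∑ k ∈ Finset.univ.filter (fun k => τ k ≤ m),
        (∏ j ∈ Finset.Iio k, (1 - p (τ j))) * p (τ k) := by
    intro τ
    calc ∑ k : Fin n, (∏ j ∈ Finset.Iio k, (1 - p (τ j))) * p (τ k) * I (τ k)
        = ∑ k : Fin n, ∑ m : Fin n,
            (if τ k ≤ m then ((∏ j ∈ Finset.Iio k, (1 - p (τ j))) * p (τ k)) * d m else 0) := by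
          refine Finset.sum_congr rfl fun k _ => ?_
          rw [hd (τ k), Finset.mul_sum]
          exact Finset.sum_congr rfl fun m _ => by split <;> simp
      _ = ∑ m : Fin n, ∑ k : Fin n,
            (if τ k ≤ m then ((∏ j ∈ Finset.Iio k, (1 - p (τ j))) * p (τ k)) * d m else 0) :=
          Finset.sum_comm
      _ = ∑ m : Fin n, d m * ∑ k ∈ Finset.univ.filter (fun k => τ k ≤ m),
            (∏ j ∈ Finset.Iio k, (1 - p (τ j))) * p (τ k) := by
          refine Finset.sum_congr rfl fun m _ => ?_
          rw [← Finset.sum_filter, Finset.mul_sum]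
          exact Finset.sum_congr rfl fun k _ => by ring
  -- identity order attains the bound with equality
  have idA : ∀ m : Fin n,
      ∑ k ∈ Finset.univ.filter (fun k => k ≤ m),
        (∏ j ∈ Finset.Iio k, (1 - p j)) * p k = 1 - ∏ i ∈ Finset.Iic m, (1 - p i) := by
    intro m
    have hfil : Finset.univ.filter (fun k => k ≤ m) = Finset.Iic m := by
      ext x; simp [Finset.mem_Iic]
    have hfil2 : ∀ k ∈ Finset.Iic m, (Finset.Iic m).filter (· < k) = Finset.Iio k := by
      intro k hk
      simp only [Finset.mem_Iic] at hk
      ext x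
      simp only [Finset.mem_filter, Finset.mem_Iic, Finset.mem_Iio]
      exact ⟨fun h => h.2, fun h => ⟨le_trans (le_of_lt h) hk, h⟩⟩
    rw [hfil, ← telescope_aux p (Finset.Iic m)]
    exact (Finset.sum_congr rfl fun k hk => by rw [hfil2 k hk]).symm
  rw [expand σ, show (∑ k : Fin n, (∏ j ∈ Finset.Iio k, (1 - p j)) * p k * I k) =
      ∑ k : Fin n, (∏ j ∈ Finset.Iio k, (1 - p ((1 : Equiv.Perm (Fin n)) j))) *
        p ((1 : Equiv.Perm (Fin n)) k) * I ((1 : Equiv.Perm (Fin n)) k) from rfl, expand 1]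
  refine Finset.sum_le_sum fun m _ => ?_
  refine mul_le_mul_of_nonneg_left ?_ (hd0 m)
  have key := key_aux p hp0 hp1 σ (Finset.Iic m)
  simp only [Finset.mem_Iic] at key
  calc ∑ k ∈ Finset.univ.filter (fun k => σ k ≤ m),
        (∏ j ∈ Finset.Iio k, (1 - p (σ j))) * p (σ k)
      ≤ 1 - ∏ i ∈ Finset.Iic m, (1 - p i) := key
    _ = ∑ k ∈ Finset.univ.filter (fun k => (1 : Equiv.Perm (Fin n)) k ≤ m),
        (∏ j ∈ Finset.Iio k, (1 - p ((1 : Equiv.Perm (Fin n)) j))) *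
          p ((1 : Equiv.Perm (Fin n)) k) := (idA m).symm
end

section
/- For n users with values I_1, …, I_n ≥ 0 and acceptance probabilities p_1, …, p_n ∈ [0,1], probed in a fixed order and stopping at the first acceptance, the expected value Σ_{k=1}^{n} (Π_{j<k}(1 − p_j)) p_k I_k is a nondecreasing function of each p_z, provided I_z ≥ I_k for all k > z (i.e., users are probed in non-increasing order of value). -/
private lemma tele_aux {n : ℕ} (t : Fin n → ℝ) (s : Finset (Fin n)) :
    ∑ k ∈ s, (∏ j ∈ s.filter (· < k), (1 - t j)) * t k = 1 - ∏ j ∈ s, (1 - t j) := by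
  induction s using Finset.induction_on_max with
  | empty => simp
  | insert a s ha ih =>
    rw [Finset.sum_insert (fun h => absurd (ha a h) (lt_irrefl a)),
      Finset.prod_insert (fun h => absurd (ha a h) (lt_irrefl a))]
    have h1 : (insert a s).filter (· < a) = s := by
      ext x
      simp only [Finset.mem_filter, Finset.mem_insert]
      constructor
      · rintro ⟨h | h, h2⟩
        · exact absurd h2 (by simp [h])
        · exact h
      · exact fun h => ⟨Or.inr h, ha x h⟩
    have h2 : ∀ k ∈ s, (insert a s).filter (· < k) = s.filter (· < k) := by
      intro k hk
      ext x
      simp only [Finset.mem_filter, Finset.mem_insert]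
      constructor
      · rintro ⟨h | h, h2⟩
        · exact absurd (h ▸ h2) (not_lt.2 (ha k hk).le)
        · exact ⟨h, h2⟩
      · exact fun ⟨h, h2⟩ => ⟨Or.inr h, h2⟩
    rw [h1, Finset.sum_congr rfl (fun k hk => by rw [h2 k hk]), ih]
    ring

private lemma split_aux {n : ℕ} (z : Fin n) (f : Fin n → ℝ) :
    ∑ k : Fin n, f k = ∑ k ∈ Finset.Iio z, f k + f z + ∑ k ∈ Finset.Ioi z, f k := by
  have h1 : (Finset.univ : Finset (Fin n)) = Finset.Iio z ∪ Finset.Ici z := by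
    ext x; simp [lt_or_ge]
  have h2 : Finset.Ici z = insert z (Finset.Ioi z) := by
    ext x; simp [le_iff_lt_or_eq, eq_comm, or_comm]
  rw [h1, Finset.sum_union (by simp [Finset.disjoint_left]), h2,
    Finset.sum_insert (by simp), add_assoc]

theorem stmt_5 (n : ℕ) (I : Fin n → ℝ) (hInn : ∀ i, 0 ≤ I i) (z : Fin n)
    (hIz : ∀ k : Fin n, z < k → I k ≤ I z)
    (p q : Fin n → ℝ)
    (hp : ∀ i, 0 ≤ p i ∧ p i ≤ 1) (hq : ∀ i, 0 ≤ q i ∧ q i ≤ 1)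
    (hagree : ∀ i : Fin n, i ≠ z → p i = q i) (hz : p z ≤ q z) :
    ∑ k : Fin n, (∏ j ∈ Finset.Iio k, (1 - p j)) * p k * I k ≤
      ∑ k : Fin n, (∏ j ∈ Finset.Iio k, (1 - q j)) * q k * I k := by
  set C : ℝ := ∏ j ∈ Finset.Iio z, (1 - q j) with hCdef
  have hCp : ∏ j ∈ Finset.Iio z, (1 - p j) = C :=
    Finset.prod_congr rfl fun j hj => by
      rw [hagree j (ne_of_lt (Finset.mem_Iio.1 hj))]
  have hC0 : 0 ≤ C :=
    Finset.prod_nonneg fun j _ => by linarith [(hq j).2]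
  set E : Fin n → ℝ := fun k => ∏ j ∈ Finset.Ioo z k, (1 - q j) with hEdef
  have hE0 : ∀ k, 0 ≤ E k := fun k =>
    Finset.prod_nonneg fun j _ => by linarith [(hq j).2]
  set S : ℝ := ∑ k ∈ Finset.Ioi z, E k * q k * I k with hSdef
  -- factorization of products for k > z
  have hfac : ∀ (t : Fin n → ℝ), (∀ j, j ≠ z → t j = q j) → ∀ k, z < k →
      ∏ j ∈ Finset.Iio k, (1 - t j) = (1 - t z) * (C * E k) := by
    intro t ht k hk
    have hset : Finset.Iio k = insert z (Finset.Iio z ∪ Finset.Ioo z k) := by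
      ext x
      simp only [Finset.mem_Iio, Finset.mem_insert, Finset.mem_union, Finset.mem_Ioo]
      constructor
      · intro hx
        rcases lt_trichotomy x z with h | h | h
        · exact Or.inr (Or.inl h)
        · exact Or.inl h
        · exact Or.inr (Or.inr ⟨h, hx⟩)
      · rintro (h | h | ⟨_, h⟩)
        · exact h ▸ hk
        · exact h.trans hk
        · exact h
    have hnz : z ∉ Finset.Iio z ∪ Finset.Ioo z k := by simp
    have hdisj : Disjoint (Finset.Iio z) (Finset.Ioo z k) := by
      simp only [Finset.disjoint_left, Finset.mem_Iio, Finset.mem_Ioo]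
      intro a h1 h2
      exact absurd h2.1 (not_lt.2 h1.le)
    rw [hset, Finset.prod_insert hnz, Finset.prod_union hdisj]
    congr 1
    rw [hCdef, hEdef]
    congr 1
    · exact Finset.prod_congr rfl fun j hj => by
        rw [ht j (ne_of_lt (Finset.mem_Iio.1 hj))]
    · exact Finset.prod_congr rfl fun j hj => by
        rw [ht j (ne_of_gt (Finset.mem_Ioo.1 hj).1)]
  have hqq : ∀ j, j ≠ z → q j = q j := fun _ _ => rfl
  -- rewrite both sums
  rw [split_aux z (fun k => (∏ j ∈ Finset.Iio k, (1 - p j)) * p k * I k),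
    split_aux z (fun k => (∏ j ∈ Finset.Iio k, (1 - q j)) * q k * I k)]
  have hlow : ∑ k ∈ Finset.Iio z, (∏ j ∈ Finset.Iio k, (1 - p j)) * p k * I k
      = ∑ k ∈ Finset.Iio z, (∏ j ∈ Finset.Iio k, (1 - q j)) * q k * I k := by
    refine Finset.sum_congr rfl fun k hk => ?_
    have hkz : k < z := Finset.mem_Iio.1 hk
    rw [hagree k (ne_of_lt hkz)]
    congr 1
    congr 1
    exact Finset.prod_congr rfl fun j hj =>
      by rw [hagree j (ne_of_lt ((Finset.mem_Iio.1 hj).trans hkz))]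
  have hhighp : ∑ k ∈ Finset.Ioi z, (∏ j ∈ Finset.Iio k, (1 - p j)) * p k * I k
      = (1 - p z) * (C * S) := by
    rw [hSdef, Finset.mul_sum, Finset.mul_sum]
    refine Finset.sum_congr rfl fun k hk => ?_
    have hk' : z < k := Finset.mem_Ioi.1 hk
    rw [hfac p (fun j hj => hagree j hj) k hk', hagree k (ne_of_gt hk')]
    ring
  have hhighq : ∑ k ∈ Finset.Ioi z, (∏ j ∈ Finset.Iio k, (1 - q j)) * q k * I k
      = (1 - q z) * (C * S) := by
    rw [hSdef, Finset.mul_sum, Finset.mul_sum]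
    refine Finset.sum_congr rfl fun k hk => ?_
    have hk' : z < k := Finset.mem_Ioi.1 hk
    rw [hfac q hqq k hk']
    ring
  rw [hlow, hhighp, hhighq, hCp]
  -- bound S ≤ I z
  have htele : ∑ k ∈ Finset.Ioi z, E k * q k = 1 - ∏ j ∈ Finset.Ioi z, (1 - q j) := by
    rw [← tele_aux q (Finset.Ioi z)]
    refine Finset.sum_congr rfl fun k hk => ?_
    congr 1
    rw [hEdef]
    refine Finset.prod_congr ?_ fun _ _ => rfl
    ext x
    simp only [Finset.mem_Ioo, Finset.mem_filter, Finset.mem_Ioi]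
  have hsum1 : ∑ k ∈ Finset.Ioi z, E k * q k ≤ 1 := by
    rw [htele]
    have : (0:ℝ) ≤ ∏ j ∈ Finset.Ioi z, (1 - q j) :=
      Finset.prod_nonneg fun j _ => by linarith [(hq j).2]
    linarith
  have hS : S ≤ I z := by
    have h1 : S ≤ ∑ k ∈ Finset.Ioi z, E k * q k * I z := by
      refine Finset.sum_le_sum fun k hk => ?_
      have := hIz k (Finset.mem_Ioi.1 hk)
      have h0 : 0 ≤ E k * q k := mul_nonneg (hE0 k) (hq k).1
      nlinarith
    have h2 : ∑ k ∈ Finset.Ioi z, E k * q k * I z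
        = (∑ k ∈ Finset.Ioi z, E k * q k) * I z := by
      rw [Finset.sum_mul]
    linarith [h1, h2 ▸ (mul_le_of_le_one_left (hInn z) hsum1 : (∑ k ∈ Finset.Ioi z, E k * q k) * I z ≤ I z)]
  have hS0 : 0 ≤ S :=
    Finset.sum_nonneg fun k hk =>
      mul_nonneg (mul_nonneg (hE0 k) (hq k).1) (hInn k)
  nlinarith [mul_nonneg hC0 (sub_nonneg.2 hS), sub_nonneg.2 hz]
end
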